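/- (Misra–Gries undercount guarantee, as claimed for Algorithm 4.) Let σ = (a₁, …, a_m) be a stream of elements of a type with decidable equality, let k ≥ 2, and run the Misra–Gries algorithm with capacity k-1 on σ. Then for every element j, the returned estimate satisfies f_j - m/k ≤ f̂_j ≤ f_j, where f_j is the true number of occurrences of j in σ. -/

import Mathlib

/-- One step of the Misra–Gries algorithm with capacity `k - 1`.  The state is
a finitely supported map `f : α →₀ ℕ` from elements to (positive) counters;
elements with counter `0` are exactly those not present in the map.  On reading
`a`: if `a` has a counter, increment it; else if fewer than `k - 1` elements
are currently stored, insert `a` with counter `1`; otherwise decrement every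
counter by `1` (counters reaching `0` drop out of the support). -/
noncomputable def mgStep {α : Type*} [DecidableEq α] (k : ℕ) (f : α →₀ ℕ) (a : α) :
    α →₀ ℕ :=
  if 0 < f a then f.update a (f a + 1)
  else if f.support.card < k - 1 then f.update a 1
  else f.mapRange (· - 1) (Nat.zero_sub 1)

/-- Running the Misra–Gries algorithm with capacity `k - 1` on the stream `σ`,
starting from the empty map; `mgRun k σ j` is the final estimated count `f̂ⱼ`
of element `j` (`0` if `j` is absent from the final map). -/
noncomputable def mgRun {α : Type*} [DecidableEq α] (k : ℕ) (σ : List α) : α →₀ ℕ :=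
  σ.foldl (mgStep k) 0

/-- Misra–Gries undercount guarantee: for every element `j`, the estimate
`f̂ⱼ` satisfies `fⱼ - m / k ≤ f̂ⱼ ≤ fⱼ`, where `fⱼ` is the true number of
occurrences of `j` in the stream `σ` of length `m`. -/
private lemma mg_update_add {α : Type*} [DecidableEq α] (f : α →₀ ℕ) (a : α) :
    f.update a (f a + 1) = f + Finsupp.single a 1 := by
  ext x
  rcases eq_or_ne x a with rfl | hx
  · simp
  · simp [hx, Finsupp.single_apply, Ne.symm hx]

private lemma mg_update_one {α : Type*} [DecidableEq α] (f : α →₀ ℕ) (a : α) (h : f a = 0) :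
    f.update a 1 = f + Finsupp.single a 1 := by
  ext x
  rcases eq_or_ne x a with rfl | hx
  · simp [h]
  · simp [hx, Finsupp.single_apply, Ne.symm hx]

private lemma mg_sum_add_single {α : Type*} [DecidableEq α] (f : α →₀ ℕ) (a : α) :
    (f + Finsupp.single a 1).sum (fun _ n => n) = f.sum (fun _ n => n) + 1 := by
  rw [Finsupp.sum_add_index' (fun _ => rfl) (fun _ _ _ => rfl), Finsupp.sum_single_index rfl]

private lemma mg_sum_sub {α : Type*} [DecidableEq α] (f : α →₀ ℕ) :
    (f.mapRange (· - 1) (Nat.zero_sub 1)).sum (fun _ n => n) + f.support.card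
      = f.sum (fun _ n => n) := by
  rw [Finsupp.sum_mapRange_index (fun _ => rfl), Finsupp.sum, Finsupp.sum,
    Finset.card_eq_sum_ones, ← Finset.sum_add_distrib]
  refine Finset.sum_congr rfl fun x hx => ?_
  have : f x ≠ 0 := Finsupp.mem_support_iff.mp hx
  omega

private lemma mg_card_le_sum {α : Type*} [DecidableEq α] (f : α →₀ ℕ) :
    f.support.card ≤ f.sum (fun _ n => n) := by
  rw [Finsupp.sum, Finset.card_eq_sum_ones]
  refine Finset.sum_le_sum fun x hx => ?_
  have : f x ≠ 0 := Finsupp.mem_support_iff.mp hx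
  omega

private lemma mg_invariant {α : Type*} [DecidableEq α] (k : ℕ) (hk : 2 ≤ k)
    (σ : List α) (j : α) :
    (mgRun k σ) j ≤ σ.count j ∧
      (σ.count j - (mgRun k σ) j) * k + (mgRun k σ).sum (fun _ n => n) ≤ σ.length := by
  induction σ using List.reverseRecOn with
  | nil => simp [mgRun]
  | append_singleton σ a ih =>
    obtain ⟨h1, h2⟩ := ih
    obtain ⟨d, hd⟩ : ∃ d, σ.count j = (mgRun k σ) j + d :=
      ⟨_, (Nat.add_sub_cancel' h1).symm⟩
    rw [hd, Nat.add_sub_cancel_left] at h2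
    have hrun : mgRun k (σ ++ [a]) = mgStep k (mgRun k σ) a := by
      simp only [mgRun, List.foldl_append, List.foldl_cons, List.foldl_nil]
    set f := mgRun k σ with hf
    set S := f.sum (fun _ n => n) with hS
    rw [hrun, List.length_append, List.length_singleton, mgStep]
    rcases eq_or_ne j a with rfl | hja
    · -- j = a
      have hcount : (σ ++ [j]).count j = σ.count j + 1 := by simp
      rw [hcount, hd]
      split_ifs with hpos hcard
      · -- increment
        rw [mg_update_add, mg_sum_add_single]
        have happ : ((f + Finsupp.single j 1 : α →₀ ℕ)) j = f j + 1 := by simp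
        rw [happ]
        have he : f j + d + 1 - (f j + 1) = d := by omega
        rw [he]
        exact ⟨by omega, by omega⟩
      · -- insert
        have hfa : f j = 0 := by omega
        rw [mg_update_one f j hfa, mg_sum_add_single]
        have happ : ((f + Finsupp.single j 1 : α →₀ ℕ)) j = f j + 1 := by simp
        rw [happ]
        have he : f j + d + 1 - (f j + 1) = d := by omega
        rw [he]
        exact ⟨by omega, by omega⟩
      · -- decrement
        have hfa : f j = 0 := by omega
        have hcard' : k - 1 ≤ f.support.card := by omega
        have hsum := mg_sum_sub f
        have hcs := mg_card_le_sum f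
        rw [← hS] at hsum hcs
        have happ : (f.mapRange (· - 1) (Nat.zero_sub 1)) j = f j - 1 :=
          Finsupp.mapRange_apply
        rw [happ]
        have he : f j + d + 1 - (f j - 1) = d + 1 := by omega
        rw [he, add_mul, one_mul]
        exact ⟨by omega, by omega⟩
    · -- j ≠ a
      have hcount : (σ ++ [a]).count j = σ.count j := by
        simp [List.count_append, List.count_singleton', hja, Ne.symm hja]
      rw [hcount, hd]
      split_ifs with hpos hcard
      · rw [mg_update_add, mg_sum_add_single]
        have happ : ((f + Finsupp.single a 1 : α →₀ ℕ)) j = f j := by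
          simp [Finsupp.single_apply, Ne.symm hja]
        rw [happ, Nat.add_sub_cancel_left]
        exact ⟨by omega, by omega⟩
      · have hfa : f a = 0 := by omega
        rw [mg_update_one f a hfa, mg_sum_add_single]
        have happ : ((f + Finsupp.single a 1 : α →₀ ℕ)) j = f j := by
          simp [Finsupp.single_apply, Ne.symm hja]
        rw [happ, Nat.add_sub_cancel_left]
        exact ⟨by omega, by omega⟩
      · have hcard' : k - 1 ≤ f.support.card := by omega
        have hsum := mg_sum_sub f
        have hcs := mg_card_le_sum f
        rw [← hS] at hsum hcs
        have happ : (f.mapRange (· - 1) (Nat.zero_sub 1)) j = f j - 1 :=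
          Finsupp.mapRange_apply
        rw [happ]
        have hb : f j + d - (f j - 1) ≤ d + 1 := by omega
        have hmul := Nat.mul_le_mul_right k hb
        rw [add_mul, one_mul] at hmul
        refine ⟨by omega, ?_⟩
        omega

theorem mgRun_count_bounds {α : Type*} [DecidableEq α] (k : ℕ) (hk : 2 ≤ k)
    (σ : List α) (j : α) :
    (σ.count j : ℝ) - (σ.length : ℝ) / (k : ℝ) ≤ (mgRun k σ j : ℝ) ∧
      (mgRun k σ j : ℝ) ≤ (σ.count j : ℝ) := by
  obtain ⟨h1, h2⟩ := mg_invariant k hk σ j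
  have hk0 : (0 : ℝ) < (k : ℝ) := by
    have : 0 < k := by omega
    exact_mod_cast this
  refine ⟨?_, by exact_mod_cast h1⟩
  have h3 : (σ.count j - mgRun k σ j) * k ≤ σ.length :=
    le_trans (Nat.le_add_right _ _) h2
  have h4 : ((σ.count j : ℝ) - (mgRun k σ j : ℝ)) * (k : ℝ) ≤ (σ.length : ℝ) := by
    have := (Nat.cast_le (α := ℝ)).mpr h3
    rwa [Nat.cast_mul, Nat.cast_sub h1] at this
  have h5 : (σ.count j : ℝ) - (mgRun k σ j : ℝ) ≤ (σ.length : ℝ) / (k : ℝ) :=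
    (le_div_iff₀ hk0).mpr h4
  linarith
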